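/- Let 𝒜 be a (possibly infinite) constraint satisfaction problem on a set X with range a compact Polish space Y equipped with a Borel probability measure, where each constraint has finite domain. If e · p(𝒜) · (d(𝒜) + 1) < 1, where p(𝒜) is the supremum of the violation probabilities of constraints and d(𝒜) is the supremum over constraints A of the number of other constraints whose domains intersect dom(A), then 𝒜 has a solution, i.e., there is a coloring f : X → Y satisfying all constraints. -/

import Mathlib

open MeasureTheory

/-- A constraint on `X` with range `Y`: a finite domain together with a measurable set of
forbidden colorings of the domain. -/
structure CSPConstraint (X Y : Type*) [MeasurableSpace Y] where
  dom : Finset X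
  bad : Set ({x // x ∈ dom} → Y)
  meas : MeasurableSet bad

open scoped Classical ENNReal

namespace LLLAux

variable {X Y : Type*} [MeasurableSpace Y]


/-- Extend a coloring of `D` to all of `X` by a default value. -/
noncomputable def extendD (D : Finset X) (y0 : Y) (g : {x // x ∈ D} → Y) : X → Y :=
  fun x => if hx : x ∈ D then g ⟨x, hx⟩ else y0

/-- The event (as a set of colorings of `D`) that constraint `A` is violated. -/
noncomputable def ev (D : Finset X) (y0 : Y) (A : CSPConstraint X Y) :
    Set ({x // x ∈ D} → Y) :=
  {g | (fun x : {x // x ∈ A.dom} => extendD D y0 g x.1) ∈ A.bad}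

lemma measurable_extend_res (D : Finset X) (y0 : Y) (A : CSPConstraint X Y) :
    Measurable fun (g : {x // x ∈ D} → Y) (x : {x // x ∈ A.dom}) => extendD D y0 g x.1 := by
  apply measurable_pi_lambda
  intro x
  by_cases hx : (x : X) ∈ D
  · simpa [extendD, hx] using measurable_pi_apply (⟨x.1, hx⟩ : {x // x ∈ D})
  · simpa [extendD, hx] using measurable_const

lemma measurableSet_ev (D : Finset X) (y0 : Y) (A : CSPConstraint X Y) :
    MeasurableSet (ev D y0 A) :=
  (measurable_extend_res D y0 A) A.meas

/-- The conjunction of the complements of the events of the constraints in `T`. -/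
noncomputable def CE (D : Finset X) (y0 : Y) (T : Finset (CSPConstraint X Y)) :
    Set ({x // x ∈ D} → Y) :=
  ⋂ B ∈ T, (ev D y0 B)ᶜ

lemma measurableSet_CE (D : Finset X) (y0 : Y) (T : Finset (CSPConstraint X Y)) :
    MeasurableSet (CE D y0 T) :=
  MeasurableSet.biInter T.countable_toSet fun B _ => (measurableSet_ev D y0 B).compl

lemma CE_empty (D : Finset X) (y0 : Y) : CE D y0 ∅ = Set.univ := by simp [CE]

lemma CE_insert (D : Finset X) (y0 : Y) (j : CSPConstraint X Y) (T : Finset (CSPConstraint X Y)) :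
    CE D y0 (insert j T) = CE D y0 T \ ev D y0 j := by
  simp only [CE, Finset.set_biInter_insert]
  rw [Set.diff_eq, Set.inter_comm]

lemma CE_anti (D : Finset X) (y0 : Y) {T T' : Finset (CSPConstraint X Y)} (h : T ⊆ T') :
    CE D y0 T' ⊆ CE D y0 T := by
  apply Set.biInter_subset_biInter_left
  exact fun B hB => h hB

lemma mem_CE (D : Finset X) (y0 : Y) {T : Finset (CSPConstraint X Y)}
    {g : {x // x ∈ D} → Y} : g ∈ CE D y0 T ↔ ∀ B ∈ T, g ∉ ev D y0 B := by
  simp [CE]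


/-- The measurable equivalence splitting colorings of `D` along membership in `A.dom`. -/
noncomputable def eA (D : Finset X) (A : CSPConstraint X Y) :
    ({x // x ∈ D} → Y) ≃ᵐ
      ({i : {x // x ∈ D} // (i : X) ∈ A.dom} → Y) ×
      ({i : {x // x ∈ D} // ¬ (i : X) ∈ A.dom} → Y) :=
  MeasurableEquiv.piEquivPiSubtypeProd (fun _ => Y) (fun i : {x // x ∈ D} => (i : X) ∈ A.dom)

/-- The event of `A`, expressed on the coordinates in `A.dom`. -/
noncomputable def ev1 (D : Finset X) (y0 : Y) (A : CSPConstraint X Y) :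
    Set ({i : {x // x ∈ D} // (i : X) ∈ A.dom} → Y) :=
  {h | (fun x : {x // x ∈ A.dom} =>
      if hx : (x : X) ∈ D then h ⟨⟨x.1, hx⟩, x.2⟩ else y0) ∈ A.bad}

/-- The event of `B`, expressed on the coordinates outside `A.dom`. -/
noncomputable def ev2 (D : Finset X) (y0 : Y) (A B : CSPConstraint X Y) :
    Set ({i : {x // x ∈ D} // ¬ (i : X) ∈ A.dom} → Y) :=
  {h | (fun x : {x // x ∈ B.dom} =>
      if hx : (x : X) ∈ D ∧ ¬ (x : X) ∈ A.dom then h ⟨⟨x.1, hx.1⟩, hx.2⟩ else y0) ∈ B.bad}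

lemma measurableSet_ev1 (D : Finset X) (y0 : Y) (A : CSPConstraint X Y) :
    MeasurableSet (ev1 D y0 A) := by
  apply MeasurableSet.preimage A.meas
  apply measurable_pi_lambda
  intro x
  by_cases hx : (x : X) ∈ D
  · simpa [hx] using measurable_pi_apply _
  · simpa [hx] using measurable_const

lemma measurableSet_ev2 (D : Finset X) (y0 : Y) (A B : CSPConstraint X Y) :
    MeasurableSet (ev2 D y0 A B) := by
  apply MeasurableSet.preimage B.meas
  apply measurable_pi_lambda
  intro x
  by_cases hx : (x : X) ∈ D ∧ ¬ (x : X) ∈ A.dom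
  · simpa [hx] using measurable_pi_apply _
  · simpa [hx] using measurable_const

lemma mem_ev_iff1 (D : Finset X) (y0 : Y) (A : CSPConstraint X Y) (g : {x // x ∈ D} → Y) :
    g ∈ ev D y0 A ↔ (eA D A g).1 ∈ ev1 D y0 A := by
  have : (fun x : {x // x ∈ A.dom} => extendD D y0 g x.1)
      = (fun x : {x // x ∈ A.dom} =>
          if hx : (x : X) ∈ D then (eA D A g).1 ⟨⟨x.1, hx⟩, x.2⟩ else y0) := by
    funext x
    by_cases hx : (x : X) ∈ D
    · simp only [extendD, dif_pos hx]
      rfl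
    · simp only [extendD, dif_neg hx]
  simp only [ev, ev1, Set.mem_setOf_eq, this]

lemma mem_ev_iff2 (D : Finset X) (y0 : Y) (A B : CSPConstraint X Y)
    (hdisj : ∀ x ∈ B.dom, x ∉ A.dom) (g : {x // x ∈ D} → Y) :
    g ∈ ev D y0 B ↔ (eA D A g).2 ∈ ev2 D y0 A B := by
  have : (fun x : {x // x ∈ B.dom} => extendD D y0 g x.1)
      = (fun x : {x // x ∈ B.dom} =>
          if hx : (x : X) ∈ D ∧ ¬ (x : X) ∈ A.dom then (eA D A g).2 ⟨⟨x.1, hx.1⟩, hx.2⟩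
          else y0) := by
    funext x
    by_cases hx : (x : X) ∈ D
    · have hx' : (x : X) ∈ D ∧ ¬ (x : X) ∈ A.dom := ⟨hx, hdisj x.1 x.2⟩
      simp only [extendD, dif_pos hx, dif_pos hx']
      rfl
    · have hx' : ¬ ((x : X) ∈ D ∧ ¬ (x : X) ∈ A.dom) := fun h => hx h.1
      simp only [extendD, dif_neg hx, dif_neg hx']
  simp only [ev, ev2, Set.mem_setOf_eq, this]


section Measure

variable (μ : Measure Y) [IsProbabilityMeasure μ] (D : Finset X) (y0 : Y)

noncomputable def piD (D : Finset X) : Measure ({x // x ∈ D} → Y) :=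
  Measure.pi fun _ => μ

instance (D : Finset X) : IsProbabilityMeasure (piD (X := X) μ D) :=
  Measure.pi.instIsProbabilityMeasure _

lemma mp_eA (A : CSPConstraint X Y) :
    MeasurePreserving (eA D A) (piD μ D)
      ((Measure.pi fun _ : {i : {x // x ∈ D} // (i : X) ∈ A.dom} => μ).prod
       (Measure.pi fun _ : {i : {x // x ∈ D} // ¬ (i : X) ∈ A.dom} => μ)) :=
  measurePreserving_piEquivPiSubtypeProd (fun _ => μ) _

lemma ev_eq_preimage (A : CSPConstraint X Y) :
    ev D y0 A = eA D A ⁻¹' (ev1 D y0 A ×ˢ Set.univ) := by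
  ext g
  simp [mem_ev_iff1 D y0 A g, Set.mem_prod]

lemma CE_eq_preimage (A : CSPConstraint X Y) (T : Finset (CSPConstraint X Y))
    (hdisj : ∀ B ∈ T, ∀ x ∈ B.dom, x ∉ A.dom) :
    CE D y0 T = eA D A ⁻¹' (Set.univ ×ˢ ⋂ B ∈ T, (ev2 D y0 A B)ᶜ) := by
  ext g
  simp only [CE, Set.mem_iInter, Set.mem_compl_iff, Set.mem_preimage, Set.mem_prod,
    Set.mem_univ, true_and]
  exact forall₂_congr fun B hB => not_congr (mem_ev_iff2 D y0 A B (hdisj B hB) g)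

lemma meas_ev (A : CSPConstraint X Y) :
    piD μ D (ev D y0 A)
      = (Measure.pi fun _ : {i : {x // x ∈ D} // (i : X) ∈ A.dom} => μ) (ev1 D y0 A) := by
  rw [ev_eq_preimage, (mp_eA μ D A).measure_preimage_equiv, Measure.prod_prod, measure_univ,
    mul_one]

lemma meas_CE (A : CSPConstraint X Y) (T : Finset (CSPConstraint X Y))
    (hdisj : ∀ B ∈ T, ∀ x ∈ B.dom, x ∉ A.dom) :
    piD μ D (CE D y0 T)
      = (Measure.pi fun _ : {i : {x // x ∈ D} // ¬ (i : X) ∈ A.dom} => μ)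
          (⋂ B ∈ T, (ev2 D y0 A B)ᶜ) := by
  rw [CE_eq_preimage D y0 A T hdisj, (mp_eA μ D A).measure_preimage_equiv, Measure.prod_prod,
    measure_univ, one_mul]

lemma indep (A : CSPConstraint X Y) (T : Finset (CSPConstraint X Y))
    (hdisj : ∀ B ∈ T, ∀ x ∈ B.dom, x ∉ A.dom) :
    piD μ D (ev D y0 A ∩ CE D y0 T) = piD μ D (ev D y0 A) * piD μ D (CE D y0 T) := by
  have h1 : piD μ D (ev D y0 A ∩ CE D y0 T)
      = (Measure.pi fun _ : {i : {x // x ∈ D} // (i : X) ∈ A.dom} => μ) (ev1 D y0 A)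
        * (Measure.pi fun _ : {i : {x // x ∈ D} // ¬ (i : X) ∈ A.dom} => μ)
            (⋂ B ∈ T, (ev2 D y0 A B)ᶜ) := by
    rw [ev_eq_preimage D y0 A, CE_eq_preimage D y0 A T hdisj, ← Set.preimage_inter,
      Set.prod_inter_prod, Set.inter_univ, Set.univ_inter,
      (mp_eA μ D A).measure_preimage_equiv, Measure.prod_prod]
  rw [h1, meas_ev μ D y0 A, meas_CE μ D y0 A T hdisj]

lemma meas_ev_eq_pi (A : CSPConstraint X Y) (h : A.dom ⊆ D) :
    piD μ D (ev D y0 A) = (Measure.pi fun _ : {x // x ∈ A.dom} => μ) A.bad := by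
  rw [meas_ev]
  let e2 : {x // x ∈ A.dom} ≃ {i : {x // x ∈ D} // (i : X) ∈ A.dom} :=
    { toFun := fun x => ⟨⟨x.1, h x.2⟩, x.2⟩
      invFun := fun i => ⟨i.1.1, i.2⟩
      left_inv := fun x => rfl
      right_inv := fun i => rfl }
  have mp2 := measurePreserving_piCongrLeft
    (fun _ : {i : {x // x ∈ D} // (i : X) ∈ A.dom} => μ) e2
  rw [← mp2.measure_preimage_equiv (ev1 D y0 A)]
  congr 1
  ext g
  simp only [Set.mem_preimage, ev1, Set.mem_setOf_eq]
  have : (fun x : {x // x ∈ A.dom} =>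
      if hx : (x : X) ∈ D then
        (MeasurableEquiv.piCongrLeft (fun _ => Y) e2 g) ⟨⟨x.1, hx⟩, x.2⟩ else y0) = g := by
    funext x
    rw [dif_pos (h x.2)]
    have : (⟨⟨x.1, h x.2⟩, x.2⟩ : {i : {x // x ∈ D} // (i : X) ∈ A.dom}) = e2 x := rfl
    rw [this, MeasurableEquiv.coe_piCongrLeft, Equiv.piCongrLeft_apply_apply]
  rw [this]

end Measure

section Core

variable (μ : Measure Y) [IsProbabilityMeasure μ] (D : Finset X) (y0 : Y)
  (s : Finset (CSPConstraint X Y)) (p q : ℝ) (d : ℕ)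

theorem main_claim (hq0 : 0 ≤ q) (hq1 : q ≤ 1)
    (hp : ∀ A ∈ s, piD μ D (ev D y0 A) ≤ ENNReal.ofReal p)
    (hd : ∀ A ∈ s,
      (s.filter fun B => B ≠ A ∧ ((B.dom : Set X) ∩ (A.dom : Set X)).Nonempty).card ≤ d)
    (hpq : p ≤ q * (1 - q) ^ d) :
    ∀ n (S : Finset (CSPConstraint X Y)), S ⊆ s → S.card ≤ n → ∀ A ∈ s,
      piD μ D (ev D y0 A ∩ CE D y0 S) ≤ ENNReal.ofReal q * piD μ D (CE D y0 S) := by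
  have hofq : ENNReal.ofReal p ≤ ENNReal.ofReal q * ENNReal.ofReal (1 - q) ^ d := by
    rw [← ENNReal.ofReal_pow (by linarith), ← ENNReal.ofReal_mul hq0]
    exact ENNReal.ofReal_le_ofReal hpq
  have base_q : ∀ A ∈ s, piD μ D (ev D y0 A) ≤ ENNReal.ofReal q := fun A hA =>
    (hp A hA).trans (hofq.trans (mul_le_of_le_one_right zero_le
      (pow_le_one' (ENNReal.ofReal_le_one.mpr (by linarith)) d)))
  intro n
  induction n with
  | zero =>
    intro S hS hcard A hA
    have hSe : S = ∅ := Finset.card_eq_zero.mp (Nat.le_zero.mp hcard)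
    subst hSe
    rw [CE_empty]
    simpa using base_q A hA
  | succ n IH =>
    intro S hS hcard A hA
    by_cases hAS : A ∈ S
    · have hempty : ev D y0 A ∩ CE D y0 S = ∅ := by
        apply Set.eq_empty_iff_forall_notMem.mpr
        intro g hg
        exact ((mem_CE D y0).mp hg.2 A hAS) hg.1
      rw [hempty]
      simp
    · set S1 := S.filter (fun B => ((B.dom : Set X) ∩ (A.dom : Set X)).Nonempty) with hS1def
      set S2 := S.filter (fun B => ¬ ((B.dom : Set X) ∩ (A.dom : Set X)).Nonempty) with hS2def
      have hUnion : S2 ∪ S1 = S := by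
        rw [Finset.union_comm]
        exact Finset.filter_union_filter_not_eq _ S
      have hS1sub : S1 ⊆ s := (Finset.filter_subset _ _).trans hS
      have hS2sub : S2 ⊆ s := (Finset.filter_subset _ _).trans hS
      have hS1card : S1.card ≤ d := by
        refine le_trans (Finset.card_le_card ?_) (hd A hA)
        intro B hB
        rw [hS1def, Finset.mem_filter] at hB
        rw [Finset.mem_filter]
        exact ⟨hS hB.1, fun hBA => hAS (hBA ▸ hB.1), hB.2⟩
      have hdisj : ∀ B ∈ S2, ∀ x ∈ B.dom, x ∉ A.dom := by
        intro B hB x hx hxA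
        rw [hS2def, Finset.mem_filter] at hB
        exact hB.2 ⟨x, Finset.mem_coe.mpr hx, Finset.mem_coe.mpr hxA⟩
      have tele : ∀ U : Finset (CSPConstraint X Y), U ⊆ S1 →
          ENNReal.ofReal (1 - q) ^ U.card * piD μ D (CE D y0 S2)
            ≤ piD μ D (CE D y0 (S2 ∪ U)) := by
        intro U
        induction U using Finset.induction_on with
        | empty => intro _; simp
        | @insert j U hj ihU =>
          intro hU
          have hjS1 : j ∈ S1 := hU (Finset.mem_insert_self j U)
          have hUS1 : U ⊆ S1 := fun b hb => hU (Finset.mem_insert_of_mem hb)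
          have hjS : j ∈ s := hS1sub hjS1
          have hTsub : S2 ∪ U ⊆ s := Finset.union_subset hS2sub (hUS1.trans hS1sub)
          have hjT : j ∉ S2 ∪ U := by
            rw [Finset.mem_union]
            push_neg
            refine ⟨fun hjS2 => ?_, hj⟩
            rw [hS2def, Finset.mem_filter] at hjS2
            rw [hS1def, Finset.mem_filter] at hjS1
            exact hjS2.2 hjS1.2
          have hTcard : (S2 ∪ U).card ≤ n := by
            have hsubS : S2 ∪ U ⊆ S.erase j := by
              intro b hb
              rw [Finset.mem_erase]
              refine ⟨fun hbj => hjT (hbj ▸ hb), ?_⟩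
              rcases Finset.mem_union.mp hb with h' | h'
              · exact Finset.filter_subset _ _ h'
              · exact Finset.filter_subset _ _ (hUS1 h')
            have hjmemS : j ∈ S := Finset.filter_subset _ _ hjS1
            calc (S2 ∪ U).card ≤ (S.erase j).card := Finset.card_le_card hsubS
              _ = S.card - 1 := Finset.card_erase_of_mem hjmemS
              _ ≤ n := by omega
          have hclaim := IH (S2 ∪ U) hTsub hTcard j hjS
          have hCEeq : CE D y0 (S2 ∪ insert j U) = CE D y0 (S2 ∪ U) \ ev D y0 j := by
            rw [Finset.union_insert, CE_insert]
          have hdiff : piD μ D (CE D y0 (S2 ∪ U) \ ev D y0 j)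
              = piD μ D (CE D y0 (S2 ∪ U)) - piD μ D (ev D y0 j ∩ CE D y0 (S2 ∪ U)) := by
            rw [← Set.diff_inter_self_eq_diff]
            exact measure_diff Set.inter_subset_right
              ((measurableSet_ev D y0 j).inter (measurableSet_CE D y0 (S2 ∪ U))).nullMeasurableSet
              (measure_ne_top _ _)
          have hstep : ENNReal.ofReal (1 - q) * piD μ D (CE D y0 (S2 ∪ U))
              ≤ piD μ D (CE D y0 (S2 ∪ insert j U)) := by
            rw [hCEeq, hdiff]
            refine le_trans ?_ (tsub_le_tsub_left hclaim _)
            apply ENNReal.le_sub_of_add_le_left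
              (ENNReal.mul_ne_top ENNReal.ofReal_ne_top (measure_ne_top _ _))
            have hq1' : q + (1 - q) = 1 := by ring
            rw [← add_mul, ← ENNReal.ofReal_add hq0 (by linarith), hq1', ENNReal.ofReal_one,
              one_mul]
          calc ENNReal.ofReal (1 - q) ^ (insert j U).card * piD μ D (CE D y0 S2)
              = ENNReal.ofReal (1 - q)
                  * (ENNReal.ofReal (1 - q) ^ U.card * piD μ D (CE D y0 S2)) := by
                rw [Finset.card_insert_of_notMem hj, pow_succ]
                ring
            _ ≤ ENNReal.ofReal (1 - q) * piD μ D (CE D y0 (S2 ∪ U)) := by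
                gcongr
                exact ihU hUS1
            _ ≤ _ := hstep
      have htel : ENNReal.ofReal (1 - q) ^ d * piD μ D (CE D y0 S2) ≤ piD μ D (CE D y0 S) := by
        have h1 := tele S1 (Finset.Subset.refl S1)
        rw [hUnion] at h1
        refine le_trans ?_ h1
        gcongr ?_ * _
        exact pow_le_pow_right_of_le_one' (ENNReal.ofReal_le_one.mpr (by linarith)) hS1card
      have hmono : piD μ D (ev D y0 A ∩ CE D y0 S) ≤ piD μ D (ev D y0 A ∩ CE D y0 S2) := by
        apply measure_mono
        apply Set.inter_subset_inter_right
        conv_lhs => rw [← hUnion]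
        exact CE_anti D y0 Finset.subset_union_left
      have hind := indep μ D y0 A S2 hdisj
      calc piD μ D (ev D y0 A ∩ CE D y0 S)
          ≤ piD μ D (ev D y0 A) * piD μ D (CE D y0 S2) := by rw [← hind]; exact hmono
        _ ≤ ENNReal.ofReal p * piD μ D (CE D y0 S2) := by gcongr; exact hp A hA
        _ ≤ (ENNReal.ofReal q * ENNReal.ofReal (1 - q) ^ d) * piD μ D (CE D y0 S2) := by
            gcongr
        _ = ENNReal.ofReal q * (ENNReal.ofReal (1 - q) ^ d * piD μ D (CE D y0 S2)) := by ring
        _ ≤ ENNReal.ofReal q * piD μ D (CE D y0 S) := by gcongr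

theorem CE_lower (hq0 : 0 ≤ q) (hq1 : q ≤ 1)
    (hp : ∀ A ∈ s, piD μ D (ev D y0 A) ≤ ENNReal.ofReal p)
    (hd : ∀ A ∈ s,
      (s.filter fun B => B ≠ A ∧ ((B.dom : Set X) ∩ (A.dom : Set X)).Nonempty).card ≤ d)
    (hpq : p ≤ q * (1 - q) ^ d) :
    ∀ U : Finset (CSPConstraint X Y), U ⊆ s →
      ENNReal.ofReal (1 - q) ^ U.card ≤ piD μ D (CE D y0 U) := by
  intro U
  induction U using Finset.induction_on with
  | empty => intro _; rw [CE_empty]; simp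
  | @insert j U hj ihU =>
    intro hU
    have hjs : j ∈ s := hU (Finset.mem_insert_self j U)
    have hUs : U ⊆ s := fun b hb => hU (Finset.mem_insert_of_mem hb)
    have hclaim := main_claim μ D y0 s p q d hq0 hq1 hp hd hpq U.card U hUs le_rfl j hjs
    have hdiff : piD μ D (CE D y0 U \ ev D y0 j)
        = piD μ D (CE D y0 U) - piD μ D (ev D y0 j ∩ CE D y0 U) := by
      rw [← Set.diff_inter_self_eq_diff]
      exact measure_diff Set.inter_subset_right
        ((measurableSet_ev D y0 j).inter (measurableSet_CE D y0 U)).nullMeasurableSet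
        (measure_ne_top _ _)
    have hstep : ENNReal.ofReal (1 - q) * piD μ D (CE D y0 U)
        ≤ piD μ D (CE D y0 (insert j U)) := by
      rw [CE_insert, hdiff]
      refine le_trans ?_ (tsub_le_tsub_left hclaim _)
      apply ENNReal.le_sub_of_add_le_left
        (ENNReal.mul_ne_top ENNReal.ofReal_ne_top (measure_ne_top _ _))
      have hq1' : q + (1 - q) = 1 := by ring
      rw [← add_mul, ← ENNReal.ofReal_add hq0 (by linarith), hq1', ENNReal.ofReal_one, one_mul]
    calc ENNReal.ofReal (1 - q) ^ (insert j U).card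
        = ENNReal.ofReal (1 - q) * ENNReal.ofReal (1 - q) ^ U.card := by
          rw [Finset.card_insert_of_notMem hj, pow_succ]
          ring
      _ ≤ ENNReal.ofReal (1 - q) * piD μ D (CE D y0 U) := by gcongr; exact ihU hUs
      _ ≤ _ := hstep

end Core

/-- The Lovász local lemma for a finite family of constraints. -/
theorem finite_lll (μ : Measure Y) [IsProbabilityMeasure μ] (y0 : Y)
    (s : Finset (CSPConstraint X Y)) (p q : ℝ) (d : ℕ)
    (hp : ∀ A ∈ s, (Measure.pi fun _ : {x // x ∈ A.dom} => μ) A.bad ≤ ENNReal.ofReal p)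
    (hd : ∀ A ∈ s,
      (s.filter fun B => B ≠ A ∧ ((B.dom : Set X) ∩ (A.dom : Set X)).Nonempty).card ≤ d)
    (hq0 : 0 ≤ q) (hq1 : q < 1) (hpq : p ≤ q * (1 - q) ^ d) :
    ∃ f : X → Y, ∀ A ∈ s, (fun x : {x // x ∈ A.dom} => f x) ∉ A.bad := by
  classical
  set D := s.sup (fun A => A.dom) with hD
  have hsub : ∀ A ∈ s, A.dom ⊆ D := fun A hA => Finset.le_sup hA
  have hp' : ∀ A ∈ s, piD μ D (ev D y0 A) ≤ ENNReal.ofReal p := fun A hA => by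
    rw [meas_ev_eq_pi μ D y0 A (hsub A hA)]
    exact hp A hA
  have hlow := CE_lower μ D y0 s p q d hq0 (le_of_lt hq1) hp' hd hpq s (Finset.Subset.refl s)
  have hpos : piD μ D (CE D y0 s) ≠ 0 := by
    refine fun h0 => ?_
    rw [h0] at hlow
    have : (0 : ℝ≥0∞) < ENNReal.ofReal (1 - q) ^ s.card :=
      ENNReal.pow_pos (ENNReal.ofReal_pos.mpr (by linarith)) _
    exact absurd hlow (not_le.mpr this)
  obtain ⟨g, hg⟩ := nonempty_of_measure_ne_zero hpos
  refine ⟨extendD D y0 g, fun A hA hbad => ?_⟩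
  exact ((mem_CE D y0).mp hg A hA) hbad


end LLLAux

namespace LLLAux

lemma exists_q (d : ℕ) :
    ∃ q : ℝ, 0 ≤ q ∧ q < 1 ∧ 1 / (Real.exp 1 * ((d : ℝ) + 1)) ≤ q * (1 - q) ^ d := by
  rcases Nat.eq_zero_or_pos d with hd | hd
  · subst hd
    refine ⟨1/2, by norm_num, by norm_num, ?_⟩
    have h2e : (2:ℝ) ≤ Real.exp 1 := by nlinarith [Real.add_one_le_exp (1:ℝ)]
    simp only [Nat.cast_zero, pow_zero, mul_one, zero_add]
    rw [div_le_div_iff₀ (by positivity) (by norm_num)]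
    linarith
  · have ha : (0:ℝ) < (d:ℝ) := by exact_mod_cast hd
    refine ⟨1/((d:ℝ)+1), by positivity, ?_, ?_⟩
    · rw [div_lt_one (by positivity)]
      linarith
    · have h1q : 1 - 1/((d:ℝ)+1) = (d:ℝ)/((d:ℝ)+1) := by field_simp; ring
      rw [h1q]
      have h4 : (((d:ℝ)+1)/(d:ℝ)) ^ d ≤ Real.exp 1 := by
        have h3 : ((d:ℝ)+1)/(d:ℝ) ≤ Real.exp (1/(d:ℝ)) := by
          have h := Real.add_one_le_exp (1/(d:ℝ))
          calc ((d:ℝ)+1)/(d:ℝ) = 1/(d:ℝ) + 1 := by field_simp; ring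
            _ ≤ _ := h
        calc (((d:ℝ)+1)/(d:ℝ)) ^ d ≤ Real.exp (1/(d:ℝ)) ^ d :=
              pow_le_pow_left₀ (by positivity) h3 d
          _ = Real.exp ((d:ℝ) * (1/(d:ℝ))) := (Real.exp_nat_mul _ d).symm
          _ = Real.exp 1 := by rw [mul_one_div, div_self (ne_of_gt ha)]
      have h5 : (Real.exp 1)⁻¹ ≤ ((d:ℝ)/((d:ℝ)+1)) ^ d := by
        have heq : ((d:ℝ)/((d:ℝ)+1)) ^ d = ((((d:ℝ)+1)/(d:ℝ)) ^ d)⁻¹ := by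
          rw [← inv_pow, inv_div]
        rw [heq]
        exact inv_anti₀ (by positivity) h4
      calc 1/(Real.exp 1 * ((d:ℝ)+1)) = (1/((d:ℝ)+1)) * (Real.exp 1)⁻¹ := by
            rw [one_div, mul_inv, one_div, mul_comm]
        _ ≤ (1/((d:ℝ)+1)) * ((d:ℝ)/((d:ℝ)+1)) ^ d :=
            mul_le_mul_of_nonneg_left h5 (by positivity)


end LLLAux


/-- The Lovász Local Lemma for (possibly infinite) constraint satisfaction problems with
range a compact Polish space `Y` endowed with a Borel probability measure `μ`: if
`e · p(𝒜) · (d(𝒜) + 1) < 1`, where every constraint has violation probability at most `p`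
and the domain of every constraint meets the domains of at most `d` other constraints,
then there is a coloring `f : X → Y` satisfying every constraint. -/
theorem lovasz_local_lemma_CSP {X Y : Type*} [TopologicalSpace Y] [CompactSpace Y]
    [PolishSpace Y] [MeasurableSpace Y] [BorelSpace Y]
    (μ : Measure Y) [IsProbabilityMeasure μ]
    (𝒜 : Set (CSPConstraint X Y)) (p : ℝ) (d : ℕ)
    (hp : ∀ A ∈ 𝒜, (Measure.pi fun _ : {x // x ∈ A.dom} => μ) A.bad ≤ ENNReal.ofReal p)
    (hd : ∀ A ∈ 𝒜, Set.encard {B | B ∈ 𝒜 ∧ B ≠ A ∧ ((B.dom : Set X) ∩ (A.dom : Set X)).Nonempty}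
      ≤ d)
    (hlll : Real.exp 1 * p * (d + 1) < 1) :
    ∃ f : X → Y, ∀ A ∈ 𝒜, (fun x : {x // x ∈ A.dom} => f x) ∉ A.bad := by
  classical
  have hY : Nonempty Y := by
    by_contra h
    rw [not_nonempty_iff] at h
    have h1 : μ Set.univ = 1 := measure_univ
    rw [Set.univ_eq_empty_iff.mpr h, measure_empty] at h1
    exact zero_ne_one h1
  obtain ⟨y0⟩ := hY
  have hepos : (0:ℝ) < Real.exp 1 := Real.exp_pos 1
  have hd1 : (0:ℝ) < (d:ℝ) + 1 := by positivity
  set c : ℝ := 1 / (Real.exp 1 * ((d:ℝ) + 1)) with hc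
  have hcpos : 0 < c := by positivity
  have hpc : p < c := by
    rw [hc, lt_div_iff₀ (by positivity)]
    have h2 : p * (Real.exp 1 * ((d:ℝ)+1)) = Real.exp 1 * p * ((d:ℝ)+1) := by ring
    rw [h2]
    exact hlll
  set p' : ℝ := (max p 0 + c) / 2 with hp'def
  have hmax0 : (0:ℝ) ≤ max p 0 := le_max_right p 0
  have hmc : max p 0 < c := max_lt hpc hcpos
  have hp'pos : 0 < p' := by rw [hp'def]; positivity
  have hpp' : p < p' := by
    have h1 : p ≤ max p 0 := le_max_left p 0
    rw [hp'def]; linarith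
  have hp'c : p' < c := by rw [hp'def]; linarith
  obtain ⟨q, hq0, hq1, hqc⟩ := LLLAux.exists_q d
  have hpq' : p' ≤ q * (1 - q) ^ d := le_trans (le_of_lt hp'c) hqc
  -- choose open supersets of the bad sets
  have hUex : ∀ A : CSPConstraint X Y, ∃ U : Set ({x // x ∈ A.dom} → Y),
      IsOpen U ∧ (A ∈ 𝒜 → A.bad ⊆ U ∧
        (Measure.pi fun _ : {x // x ∈ A.dom} => μ) U ≤ ENNReal.ofReal p') := by
    intro A
    by_cases hA : A ∈ 𝒜
    · have hlt : (Measure.pi fun _ : {x // x ∈ A.dom} => μ) A.bad < ENNReal.ofReal p' :=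
        lt_of_le_of_lt (hp A hA) ((ENNReal.ofReal_lt_ofReal_iff hp'pos).mpr hpp')
      haveI : TopologicalSpace.PseudoMetrizableSpace ({x // x ∈ A.dom} → Y) := inferInstance
      haveI : BorelSpace ({x // x ∈ A.dom} → Y) := inferInstance
      obtain ⟨U, hAU, hUopen, hUlt⟩ := A.bad.exists_isOpen_lt_of_lt _ hlt
      exact ⟨U, hUopen, fun _ => ⟨hAU, le_of_lt hUlt⟩⟩
    · exact ⟨Set.univ, isOpen_univ, fun h => absurd h hA⟩
  choose U hUopen hUprop using hUex
  let modC : CSPConstraint X Y → CSPConstraint X Y := fun A =>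
    ⟨A.dom, U A, (hUopen A).measurableSet⟩
  let K : CSPConstraint X Y → Set (X → Y) := fun A =>
    {f : X → Y | (fun x : {x // x ∈ A.dom} => f x.1) ∈ (U A)ᶜ}
  have hKclosed : ∀ A, IsClosed (K A) := fun A =>
    IsClosed.preimage (continuous_pi fun x => continuous_apply x.1)
      (isClosed_compl_iff.mpr (hUopen A))
  have hne : (Set.univ ∩ ⋂ A : 𝒜, K A.1).Nonempty := by
    by_contra hcon
    rw [Set.not_nonempty_iff_eq_empty] at hcon
    obtain ⟨u, hu⟩ := isCompact_univ.elim_finite_subfamily_closed (fun A : 𝒜 => K A.1)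
      (fun A => hKclosed A.1) hcon
    set s : Finset (CSPConstraint X Y) := u.image (fun A => modC A.1) with hs
    have hp2 : ∀ A' ∈ s,
        (Measure.pi fun _ : {x // x ∈ A'.dom} => μ) A'.bad ≤ ENNReal.ofReal p' := by
      intro A' hA'
      obtain ⟨B, hBu, rfl⟩ := Finset.mem_image.mp hA'
      exact (hUprop B.1 B.2).2
    have hd2 : ∀ A' ∈ s,
        (s.filter fun B' => B' ≠ A' ∧ ((B'.dom : Set X) ∩ (A'.dom : Set X)).Nonempty).card
          ≤ d := by
      intro A' hA'
      obtain ⟨A, hAu, rfl⟩ := Finset.mem_image.mp hA'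
      set N' := s.filter fun B' => B' ≠ modC A.1 ∧
        ((B'.dom : Set X) ∩ ((modC A.1).dom : Set X)).Nonempty with hN'
      have hch : ∀ B' ∈ N', ∃ B, B ∈ 𝒜 ∧ modC B = B' := by
        intro B' hB'
        obtain ⟨B, hBu, hBeq⟩ := Finset.mem_image.mp (Finset.mem_filter.mp hB').1
        exact ⟨B.1, B.2, hBeq⟩
      choose! g hg1 hg2 using hch
      have hinj : Set.InjOn g ↑N' := by
        intro a ha b hb hab
        rw [← hg2 a (Finset.mem_coe.mp ha), ← hg2 b (Finset.mem_coe.mp hb), hab]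
      have himg : g '' ↑N' ⊆
          {B | B ∈ 𝒜 ∧ B ≠ A.1 ∧ ((B.dom : Set X) ∩ ((A.1).dom : Set X)).Nonempty} := by
        rintro _ ⟨B', hB', rfl⟩
        have hB'N : B' ∈ N' := Finset.mem_coe.mp hB'
        have hfil := Finset.mem_filter.mp hB'N
        refine ⟨hg1 B' hB'N, fun hgA => ?_, ?_⟩
        · apply hfil.2.1
          rw [← hg2 B' hB'N, hgA]
        · have hdom : (g B').dom = B'.dom := show (modC (g B')).dom = B'.dom from congrArg CSPConstraint.dom (hg2 B' hB'N)
          rw [hdom]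
          exact hfil.2.2
      have hcard : ((N'.card : ℕ∞)) ≤ (d : ℕ∞) := by
        calc (N'.card : ℕ∞) = (↑N' : Set (CSPConstraint X Y)).encard :=
              (Set.encard_coe_eq_coe_finsetCard N').symm
          _ = (g '' ↑N').encard := (hinj.encard_image).symm
          _ ≤ Set.encard {B | B ∈ 𝒜 ∧ B ≠ A.1 ∧
                ((B.dom : Set X) ∩ ((A.1).dom : Set X)).Nonempty} := Set.encard_mono himg
          _ ≤ (d : ℕ∞) := hd A.1 A.2
      exact_mod_cast hcard
    obtain ⟨f, hf⟩ := LLLAux.finite_lll μ y0 s p' q d hp2 hd2 hq0 hq1 hpq'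
    have hmemall : f ∈ Set.univ ∩ ⋂ A ∈ u, K A.1 := by
      refine ⟨Set.mem_univ f, ?_⟩
      rw [Set.mem_iInter₂]
      intro A hAu
      exact hf (modC A.1) (Finset.mem_image_of_mem _ hAu)
    rw [hu] at hmemall
    exact Set.notMem_empty f hmemall
  obtain ⟨f, _, hf⟩ := hne
  refine ⟨f, fun A hA hbad => ?_⟩
  have hfK : f ∈ K A := Set.mem_iInter.mp hf ⟨A, hA⟩
  exact hfK ((hUprop A hA).1 hbad)
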